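/- Let p be a prime. There exists a set E ⊆ ℚ_p of Hausdorff dimension 1 that contains no nondegenerate three-term arithmetic progression; that is, there are no three distinct points x, y, z ∈ E with x + z = 2y. -/

import Mathlib

open MeasureTheory
open scoped ENNReal NNReal

noncomputable section PadicNoAPAux

namespace PadicNoAP

open Finset

variable (p : ℕ) [hp : Fact p.Prime]

/-! ### Block structure -/

/-- Block lengths: block `k` has length `k + 2`. -/
def LL : ℕ → ℕ := fun k => ∑ j ∈ Finset.range k, (j + 2)

lemma LL_zero : LL 0 = 0 := rfl

lemma LL_succ (k : ℕ) : LL (k + 1) = LL k + (k + 2) := Finset.sum_range_succ _ _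

lemma LL_le_succ (k : ℕ) : LL k ≤ LL (k + 1) := by rw [LL_succ]; omega

lemma LL_mono : Monotone LL := monotone_nat_of_le_succ LL_le_succ

lemma le_LL (k : ℕ) : k ≤ LL k := by
  induction k with
  | zero => simp [LL_zero]
  | succ n ih => rw [LL_succ]; omega

lemma two_LL (k : ℕ) : 2 * LL k = k * (k + 3) := by
  induction k with
  | zero => simp [LL_zero]
  | succ n ih => rw [LL_succ]; ring_nf; ring_nf at ih; omega

lemma exists_block (n : ℕ) : ∃ k, LL k ≤ n ∧ n < LL (k + 1) := by
  induction n with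
  | zero => exact ⟨0, le_rfl, by rw [LL_succ, LL_zero]; omega⟩
  | succ n ih =>
    obtain ⟨k, h1, h2⟩ := ih
    rcases lt_or_ge (n + 1) (LL (k + 1)) with h | h
    · exact ⟨k, by omega, h⟩
    · refine ⟨k + 1, h, ?_⟩
      have := LL_succ (k + 1)
      omega

lemma p_two : 2 ≤ p := hp.out.two_le

lemma p_pos : 0 < p := lt_of_lt_of_le two_pos (p_two p)

lemma pp_pos (n : ℕ) : 0 < p ^ n := Nat.pow_pos (n := n) (p_pos p)

/-! ### The Behrend digit sets -/

/-- Half of `p ^ (k+2)`. -/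
def MM (k : ℕ) : ℕ := p ^ (k + 2) / 2

lemma MM_le (k : ℕ) : MM p k ≤ p ^ (k + 2) := Nat.div_le_self _ _

lemma four_le_pow (k : ℕ) : 4 ≤ p ^ (k + 2) := by
  calc (4 : ℕ) = 2 ^ 2 := rfl
  _ ≤ p ^ 2 := Nat.pow_le_pow_left (p_two p) 2
  _ ≤ p ^ (k + 2) := Nat.pow_le_pow_right (p_pos p) (by omega)

lemma two_le_MM (k : ℕ) : 2 ≤ MM p k :=
  Nat.le_div_iff_mul_le two_pos |>.2 (by have := four_le_pow p k; omega)

lemma two_MM_le (k : ℕ) : 2 * MM p k ≤ p ^ (k + 2) := by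
  have := Nat.div_add_mod (p ^ (k + 2)) 2
  unfold MM; omega

lemma pow_le_four_MM (k : ℕ) : p ^ (k + 2) ≤ 4 * MM p k := by
  have := Nat.div_add_mod (p ^ (k + 2)) 2
  have h4 := four_le_pow p k
  unfold MM; omega

lemma rothNumberNat_two_le {N : ℕ} (hN : 2 ≤ N) : 2 ≤ rothNumberNat N := by
  have h01 : ThreeAPFree (({0, 1} : Finset ℕ) : Set ℕ) := by
    intro a ha b hb c hc habc
    simp only [Finset.coe_insert, Finset.coe_singleton, Set.mem_insert_iff,
      Set.mem_singleton_iff] at ha hb hc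
    omega
  refine ThreeAPFree.le_rothNumberNat _ h01 (fun x hx => ?_) (by decide)
  simp only [Finset.mem_insert, Finset.mem_singleton] at hx
  omega

/-- A maximum-size 3AP-free subset of `range (MM p k)`. -/
def T (k : ℕ) : Finset ℕ := (rothNumberNat_spec (MM p k)).choose

lemma T_subset (k : ℕ) : T p k ⊆ Finset.range (MM p k) :=
  (rothNumberNat_spec (MM p k)).choose_spec.1

lemma T_card (k : ℕ) : (T p k).card = rothNumberNat (MM p k) :=
  (rothNumberNat_spec (MM p k)).choose_spec.2.1

lemma T_free (k : ℕ) : ThreeAPFree ((T p k : Set ℕ)) :=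
  (rothNumberNat_spec (MM p k)).choose_spec.2.2

lemma T_card_two (k : ℕ) : 2 ≤ (T p k).card := by
  rw [T_card]; exact rothNumberNat_two_le (two_le_MM p k)

lemma T_nonempty (k : ℕ) : (T p k).Nonempty :=
  Finset.card_pos.1 (by have := T_card_two p k; omega)

/-- The digit set for block `k`: the Behrend set, shifted so that it contains `0`. -/
def D (k : ℕ) : Finset ℕ := (T p k).image (fun a => a - (T p k).min' (T_nonempty p k))

lemma D_zero_mem (k : ℕ) : 0 ∈ D p k := by
  refine Finset.mem_image.2 ⟨(T p k).min' (T_nonempty p k), (T p k).min'_mem _, ?_⟩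
  omega

lemma D_lt (k : ℕ) : ∀ a ∈ D p k, 2 * a < p ^ (k + 2) := by
  intro a ha
  obtain ⟨b, hb, rfl⟩ := Finset.mem_image.1 ha
  have hbM : b < MM p k := Finset.mem_range.1 (T_subset p k hb)
  have := two_MM_le p k
  have := four_le_pow p k
  omega

lemma D_free (k : ℕ) : ThreeAPFree ((D p k : Set ℕ)) := by
  intro a ha b hb c hc habc
  rw [Finset.mem_coe, D, Finset.mem_image] at ha hb hc
  obtain ⟨a', ha', rfl⟩ := ha
  obtain ⟨b', hb', rfl⟩ := hb
  obtain ⟨c', hc', rfl⟩ := hc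
  have hma := (T p k).min'_le _ ha'
  have hmb := (T p k).min'_le _ hb'
  have hmc := (T p k).min'_le _ hc'
  have : a' + c' = b' + b' := by omega
  have := T_free p k ha' hb' hc' this
  omega

lemma D_card (k : ℕ) : (D p k).card = rothNumberNat (MM p k) := by
  rw [← T_card]
  apply Finset.card_image_of_injOn
  intro a ha b hb hab
  have hma := (T p k).min'_le _ ha
  have hmb := (T p k).min'_le _ hb
  simp only at hab
  omega

/-- Number of digits available in block `k`. -/
def q (k : ℕ) : ℕ := (D p k).card

lemma q_two (k : ℕ) : 2 ≤ q p k := by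
  rw [q, D_card]; exact rothNumberNat_two_le (two_le_MM p k)

lemma q_pos (k : ℕ) : 0 < q p k := lt_of_lt_of_le two_pos (q_two p k)

/-- Product of the digit counts of the first `k` blocks. -/
def R (k : ℕ) : ℕ := ∏ j ∈ Finset.range k, q p j

lemma R_zero : R p 0 = 1 := rfl

lemma R_succ (k : ℕ) : R p (k + 1) = R p k * q p k := Finset.prod_range_succ _ _

lemma R_pos (k : ℕ) : 0 < R p k := Finset.prod_pos fun j _ => q_pos p j

lemma R_ge (k : ℕ) : 2 ^ k ≤ R p k := by
  calc (2:ℕ) ^ k = ∏ _j ∈ Finset.range k, 2 := by simp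
  _ ≤ ∏ j ∈ Finset.range k, q p j := Finset.prod_le_prod' fun j _ => q_two p j

lemma R_mono : Monotone (R p) := by
  apply monotone_nat_of_le_succ
  intro k
  rw [R_succ]
  exact Nat.le_mul_of_pos_right _ (q_pos p k)

/-! ### `p`-adic digit blocks via `PadicInt.appr` -/

lemma dvd_iff_norm_le {x : ℤ_[p]} {n : ℕ} :
    (p : ℤ_[p]) ^ n ∣ x ↔ ‖x‖ ≤ (p : ℝ) ^ (-n : ℤ) := by
  rw [PadicInt.norm_le_pow_iff_mem_span_pow, Ideal.mem_span_singleton]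

lemma appr_dvd (x : ℤ_[p]) (n : ℕ) : (p : ℤ_[p]) ^ n ∣ x - (x.appr n : ℤ_[p]) :=
  Ideal.mem_span_singleton.1 (PadicInt.appr_spec n x)

lemma appr_eq_of_dvd {x : ℤ_[p]} {a n : ℕ} (ha : a < p ^ n)
    (h : (p : ℤ_[p]) ^ n ∣ x - (a : ℤ_[p])) : x.appr n = a := by
  have h1 := appr_dvd p x n
  have h2 : ((p ^ n : ℕ) : ℤ) ∣ ((x.appr n : ℤ) - (a : ℤ)) := by
    have hc : (((x.appr n : ℤ) - (a : ℤ) : ℤ) : ℤ_[p]) = (x - (a : ℤ_[p])) - (x - (x.appr n : ℤ_[p])) := by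
      push_cast; ring
    have h2' : (p : ℤ_[p]) ^ n ∣ (((x.appr n : ℤ) - (a : ℤ) : ℤ) : ℤ_[p]) := by
      rw [hc]; exact dvd_sub h h1
    rw [PadicInt.pow_p_dvd_int_iff] at h2'
    exact_mod_cast h2'
  have h4 := PadicInt.appr_lt x n
  have h3 : ((x.appr n : ℤ) - a) = 0 := by
    apply Int.eq_zero_of_abs_lt_dvd h2
    rw [abs_lt]
    omega
  omega

lemma appr_congr {n : ℕ} {x y : ℤ_[p]} (h : (p : ℤ_[p]) ^ n ∣ x - y) :
    x.appr n = y.appr n := by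
  apply appr_eq_of_dvd p (PadicInt.appr_lt y n)
  have : x - (y.appr n : ℤ_[p]) = (x - y) + (y - (y.appr n : ℤ_[p])) := by ring
  rw [this]
  exact dvd_add h (appr_dvd p y n)

/-- The `k`-th digit block of `x`, an integer `< p ^ (k+2)`. -/
def dig (k : ℕ) (x : ℤ_[p]) : ℕ := x.appr (LL (k + 1)) / p ^ LL k

lemma dig_spec (k : ℕ) (x : ℤ_[p]) :
    x.appr (LL (k + 1)) = x.appr (LL k) + p ^ LL k * dig p k x ∧ dig p k x < p ^ (k + 2) := by
  obtain ⟨c, hc⟩ := PadicInt.dvd_appr_sub_appr x (LL k) (LL (k + 1)) (LL_le_succ k)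
  have hmono := PadicInt.appr_mono x (LL_le_succ k)
  have happr : x.appr (LL (k + 1)) = x.appr (LL k) + p ^ LL k * c := by omega
  have hlt := PadicInt.appr_lt x (LL k)
  have hdig : dig p k x = c := by
    rw [dig, happr, Nat.add_mul_div_left _ _ (pp_pos p (LL k)),
      Nat.div_eq_of_lt hlt, zero_add]
  constructor
  · rw [hdig]; exact happr
  · rw [hdig]
    have hpe : p ^ (LL (k + 1)) = p ^ LL k * p ^ (k + 2) := by rw [LL_succ, pow_add]
    have h2 : x.appr (LL (k + 1)) < p ^ LL k * p ^ (k + 2) := hpe ▸ PadicInt.appr_lt x (LL (k + 1))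
    by_contra hcon
    push_neg at hcon
    have : p ^ LL k * p ^ (k + 2) ≤ p ^ LL k * c := Nat.mul_le_mul_left _ hcon
    omega

lemma dig_lt (k : ℕ) (x : ℤ_[p]) : dig p k x < p ^ (k + 2) := (dig_spec p k x).2

lemma dig_congr {k : ℕ} {x y : ℤ_[p]} (h : (p : ℤ_[p]) ^ (LL (k + 1)) ∣ x - y) :
    dig p k x = dig p k y := by
  rw [dig, dig, appr_congr p h]

/-- The 3AP-free set inside `ℤ_[p]`. -/
def Egood : Set ℤ_[p] := {x | ∀ k, dig p k x ∈ D p k}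

/-- Core combinatorial fact: `Egood` contains no nondegenerate 3-term AP. -/
theorem egood_free {x y z : ℤ_[p]} (hx : x ∈ Egood p) (hy : y ∈ Egood p) (hz : z ∈ Egood p)
    (heq : x + z = 2 * y) (hxy : x ≠ y) : False := by
  have hd0 : x - y ≠ 0 := sub_ne_zero.2 hxy
  set n0 : ℕ := (x - y).valuation with hn0
  have hval : ((x - y).valuation : ℤ) = (n0 : ℤ) :=
    rfl
  have hnorm : ‖x - y‖ = (p : ℝ) ^ (-(n0 : ℤ)) := by
    rw [PadicInt.norm_eq_zpow_neg_valuation hd0, hval]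
  have hp1 : (1 : ℝ) < (p : ℝ) := by exact_mod_cast hp.out.one_lt
  have hdvd_iff : ∀ n : ℕ, (p : ℤ_[p]) ^ n ∣ x - y ↔ n ≤ n0 := by
    intro n
    rw [dvd_iff_norm_le, hnorm, zpow_le_zpow_iff_right₀ hp1, neg_le_neg_iff]
    exact_mod_cast Iff.rfl
  obtain ⟨k, hk1, hk2⟩ := exists_block n0
  have hxyd : (p : ℤ_[p]) ^ (LL k) ∣ x - y := (hdvd_iff _).2 hk1
  have hyzd : (p : ℤ_[p]) ^ (LL k) ∣ y - z := by
    have : y - z = x - y := by linear_combination -heq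
    rw [this]; exact hxyd
  have hxzd : (p : ℤ_[p]) ^ (LL k) ∣ x - z := by
    have : x - z = (x - y) + (y - z) := by ring
    rw [this]; exact dvd_add hxyd hyzd
  have hnot : ¬ (p : ℤ_[p]) ^ (LL (k + 1)) ∣ x - y := by
    rw [hdvd_iff]; omega
  -- appr values at level L k agree
  have htxy : x.appr (LL k) = y.appr (LL k) := appr_congr p hxyd
  have htxz : x.appr (LL k) = z.appr (LL k) := appr_congr p hxzd
  -- decompositions at level L (k+1)
  obtain ⟨hA, haB⟩ := dig_spec p k x
  obtain ⟨hB, hbB⟩ := dig_spec p k y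
  obtain ⟨hC, hcB⟩ := dig_spec p k z
  set a := dig p k x
  set b := dig p k y
  set c := dig p k z
  set t := x.appr (LL k) with ht
  -- main congruence
  have hsum : (p : ℤ_[p]) ^ (LL (k + 1)) ∣
      (((x.appr (LL (k+1)) : ℤ) + (z.appr (LL (k+1)) : ℤ) - 2 * (y.appr (LL (k+1)) : ℤ) : ℤ) : ℤ_[p]) := by
    have hrw : (((x.appr (LL (k+1)) : ℤ) + (z.appr (LL (k+1)) : ℤ)
        - 2 * (y.appr (LL (k+1)) : ℤ) : ℤ) : ℤ_[p])
        = -(x - (x.appr (LL (k+1)) : ℤ_[p])) - (z - (z.appr (LL (k+1)) : ℤ_[p]))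
          + 2 * (y - (y.appr (LL (k+1)) : ℤ_[p])) + (x + z - 2 * y) := by
      push_cast; ring
    have hz0 : x + z - 2 * y = 0 := by rw [heq]; ring
    rw [hz0, add_zero] at hrw
    rw [hrw]
    have d1 := appr_dvd p x (LL (k+1))
    have d2 := appr_dvd p z (LL (k+1))
    have d3 := appr_dvd p y (LL (k+1))
    exact dvd_add (dvd_sub (dvd_neg.mpr d1) d2) (d3.mul_left 2)
  rw [PadicInt.pow_p_dvd_int_iff] at hsum
  -- substitute the decompositions
  have hsub : ((x.appr (LL (k+1)) : ℤ) + (z.appr (LL (k+1)) : ℤ) - 2 * (y.appr (LL (k+1)) : ℤ))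
      = (p : ℤ) ^ (LL k) * ((a : ℤ) + c - 2 * b) := by
    rw [hA, hC, hB, ← htxy, ← htxz]
    push_cast
    ring
  rw [hsub] at hsum
  have hppow : ((p : ℤ) ^ (LL (k + 1))) = (p : ℤ) ^ (LL k) * (p : ℤ) ^ (k + 2) := by
    rw [← pow_add, ← LL_succ]
  rw [hppow] at hsum
  have hppos : (0:ℤ) < (p : ℤ) := by exact_mod_cast p_pos p
  have hpk0 : ((p : ℤ) ^ (LL k)) ≠ 0 := by positivity
  have hdvd2 : ((p : ℤ) ^ (k + 2)) ∣ ((a : ℤ) + c - 2 * b) :=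
    (mul_dvd_mul_iff_left hpk0).1 hsum
  have hda := D_lt p k a (hx k)
  have hdb := D_lt p k b (hy k)
  have hdc := D_lt p k c (hz k)
  have hzero : (a : ℤ) + c - 2 * b = 0 := by
    apply Int.eq_zero_of_abs_lt_dvd hdvd2
    have hpint : ((p : ℤ) ^ (k + 2)) = ((p ^ (k + 2) : ℕ) : ℤ) := by push_cast; ring
    rw [hpint, abs_lt]
    constructor <;> push_cast <;> omega
  have hacb : a + c = b + b := by omega
  have hab : a = b := D_free p k (hx k) (hy k) (hz k) hacb
  -- then x ≡ y mod p^(L (k+1)), contradiction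
  apply hnot
  have hAB : x.appr (LL (k+1)) = y.appr (LL (k+1)) := by
    rw [hA, hB, ← htxy, hab]
  have : x - y = (x - (x.appr (LL (k+1)) : ℤ_[p])) - (y - (y.appr (LL (k+1)) : ℤ_[p])) := by
    rw [hAB]; ring
  rw [this]
  exact dvd_sub (appr_dvd p x _) (appr_dvd p y _)

/-! ### Realization of prescribed digits -/

/-- A natural number with prescribed digit blocks `c 0, …, c (K-1)` (and `0` afterwards). -/
def NN (c : ℕ → ℕ) (K : ℕ) : ℕ := ∑ k ∈ Finset.range K, c k * p ^ LL k

lemma NN_lt {c : ℕ → ℕ} (hc : ∀ k, c k < p ^ (k + 2)) (K : ℕ) : NN p c K < p ^ LL K := by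
  induction K with
  | zero => simpa [NN, LL_zero] using pp_pos p 0
  | succ n ih =>
    rw [NN, Finset.sum_range_succ, ← NN]
    have h1 : c n * p ^ LL n ≤ (p ^ (n + 2) - 1) * p ^ LL n :=
      Nat.mul_le_mul_right _ (by have := hc n; omega)
    have h2 : p ^ LL (n + 1) = p ^ (n+2) * p ^ LL n := by rw [LL_succ, pow_add, mul_comm]
    have h3 : 0 < p ^ LL n := pp_pos p _
    have h4 : 0 < p ^ (n+2) := pp_pos p _
    rw [h2]
    have : (p ^ (n + 2) - 1) * p ^ LL n + p ^ LL n = p ^ (n+2) * p ^ LL n := by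
      rw [Nat.sub_one_mul]
      have : p ^ LL n ≤ p ^ (n+2) * p ^ LL n := Nat.le_mul_of_pos_left _ h4
      omega
    omega

lemma appr_NN {c : ℕ → ℕ} (hc : ∀ k, c k < p ^ (k + 2)) (K : ℕ) (j : ℕ) :
    ((NN p c K : ℕ) : ℤ_[p]).appr (LL j) = NN p c (min j K) := by
  apply appr_eq_of_dvd
  · exact lt_of_lt_of_le (NN_lt p hc _) (Nat.pow_le_pow_right (p_pos p) (LL_mono (min_le_left _ _)))
  · have hsplit : NN p c K = NN p c (min j K) + ∑ k ∈ Finset.Ico (min j K) K, c k * p ^ LL k := by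
      rw [NN, NN, Finset.range_eq_Ico, Finset.range_eq_Ico]
      exact (Finset.sum_Ico_consecutive (M := ℕ) _ (Nat.zero_le _) (min_le_right j K)).symm
    have : ((NN p c K : ℕ) : ℤ_[p]) - ((NN p c (min j K) : ℕ) : ℤ_[p])
        = ∑ k ∈ Finset.Ico (min j K) K, (c k : ℤ_[p]) * (p : ℤ_[p]) ^ LL k := by
      rw [hsplit]
      push_cast
      ring
    rw [this]
    apply Finset.dvd_sum
    intro k hk
    have hjk : LL j ≤ LL k := by
      rcases Finset.mem_Ico.1 hk with ⟨h1, _⟩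
      rcases le_or_gt j K with h | h
      · exact LL_mono (by omega)
      · omega
    exact Dvd.dvd.mul_left (pow_dvd_pow _ hjk) _

lemma dig_NN {c : ℕ → ℕ} (hc : ∀ k, c k < p ^ (k + 2)) (K : ℕ) (k : ℕ) :
    dig p k ((NN p c K : ℕ) : ℤ_[p]) = if k < K then c k else 0 := by
  have h1 := appr_NN p hc K (k + 1)
  have h2 := appr_NN p hc K k
  rw [dig, h1]
  rcases lt_or_ge k K with h | h
  · have hmin1 : min (k + 1) K = k + 1 ∨ min (k + 1) K = k := by omega
    have hminK : min k K = k := by omega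
    rcases hmin1 with hm | hm
    · rw [hm, if_pos h, NN, Finset.sum_range_succ, ← NN]
      have := NN_lt p hc k
      rw [Nat.add_mul_div_right _ _ (pp_pos p (LL k)), Nat.div_eq_of_lt this, zero_add]
    · -- k + 1 > K impossible since k < K
      omega
  · have hm : min (k + 1) K = K := by omega
    rw [hm, if_neg (by omega)]
    apply Nat.div_eq_of_lt
    exact lt_of_lt_of_le (NN_lt p hc K) (Nat.pow_le_pow_right (p_pos p) (LL_mono h))

/-! ### The enumeration of the digit sets -/

/-- Index of `a` inside `D p k` (number of smaller elements). -/
def phi (k a : ℕ) : ℕ := ((D p k).filter (fun d => d < a)).card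

lemma phi_le (k a : ℕ) : phi p k a ≤ q p k := Finset.card_le_card (Finset.filter_subset _ _)

lemma phi_lt {k a : ℕ} (ha : a ∈ D p k) : phi p k a < q p k := by
  apply Finset.card_lt_card
  constructor
  · exact Finset.filter_subset _ _
  · intro hsub
    have := hsub ha
    simp only [Finset.mem_filter] at this
    omega

lemma phi_zero (k : ℕ) : phi p k 0 = 0 := by
  rw [phi]
  convert Finset.card_empty
  rw [Finset.filter_eq_empty_iff]
  intro a _
  omega

lemma phi_surj {k j : ℕ} (hj : j < q p k) : ∃ a ∈ D p k, phi p k a = j := by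
  set e := (D p k).orderIsoOfFin (k := q p k) rfl with he
  refine ⟨(e ⟨j, hj⟩ : ℕ), (e ⟨j, hj⟩).2, ?_⟩
  rw [phi]
  have himg : (D p k).filter (fun d => d < (e ⟨j, hj⟩ : ℕ))
      = (Finset.Iio (⟨j, hj⟩ : Fin (q p k))).image (fun i => ((e i : ℕ))) := by
    ext d
    simp only [Finset.mem_filter, Finset.mem_image, Finset.mem_Iio]
    constructor
    · rintro ⟨hd, hlt⟩
      refine ⟨e.symm ⟨d, hd⟩, ?_, by simp⟩
      rw [← e.lt_iff_lt, OrderIso.apply_symm_apply]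
      exact hlt
    · rintro ⟨i, hi, rfl⟩
      refine ⟨(e i).2, ?_⟩
      have : e i < e ⟨j, hj⟩ := e.lt_iff_lt.2 hi
      exact_mod_cast this
  rw [himg, Finset.card_image_of_injective _ (fun i i' hii => e.injective (Subtype.ext hii)),
    Fin.card_Iio]

/-! ### The mixed-radix map to `ℝ` -/

/-- Term `k` of the mixed-radix expansion map. -/
def fterm (x : ℤ_[p]) (k : ℕ) : ℝ := (phi p k (dig p k x) : ℝ) / (R p (k + 1) : ℝ)

lemma fterm_nonneg (x : ℤ_[p]) (k : ℕ) : 0 ≤ fterm p x k := by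
  have h1 : (0:ℝ) < R p (k+1) := by exact_mod_cast R_pos p (k+1)
  exact div_nonneg (by positivity) h1.le

lemma fterm_le (x : ℤ_[p]) (k : ℕ) : fterm p x k ≤ 1 / (R p k : ℝ) := by
  have h0 : (0:ℝ) < R p (k+1) := by exact_mod_cast R_pos p (k+1)
  have h1 : (0:ℝ) < R p k := by exact_mod_cast R_pos p k
  have h2 : (0:ℝ) < q p k := by exact_mod_cast q_pos p k
  have hR : (R p (k+1) : ℝ) = (R p k : ℝ) * q p k := by exact_mod_cast R_succ p k
  have hphi : (phi p k (dig p k x) : ℝ) ≤ (q p k : ℝ) := by exact_mod_cast phi_le p k (dig p k x)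
  calc fterm p x k ≤ (q p k : ℝ) / (R p (k+1) : ℝ) := by
        rw [fterm]; gcongr
  _ = 1 / (R p k : ℝ) := by rw [hR]; field_simp

lemma invR_le (k : ℕ) : (1 : ℝ) / (R p k : ℝ) ≤ (1/2) ^ k := by
  have h1 : (0:ℝ) < R p k := by exact_mod_cast R_pos p k
  rw [div_le_iff₀ h1]
  have h2 : ((2:ℝ) ^ k) ≤ (R p k : ℝ) := by exact_mod_cast R_ge p k
  calc (1:ℝ) = (1/2)^k * 2^k := by
        rw [div_pow, one_pow, one_div, inv_mul_cancel₀ (by positivity)]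
  _ ≤ (1/2)^k * (R p k : ℝ) := by gcongr

lemma R_shift (k j : ℕ) : R p k * 2 ^ j ≤ R p (k + j) := by
  have hsplit : R p (k + j) = R p k * ∏ i ∈ Finset.Ico k (k + j), q p i := by
    rw [R, R, Finset.range_eq_Ico, Finset.range_eq_Ico]
    exact (Finset.prod_Ico_consecutive (M := ℕ) _ (Nat.zero_le _) (Nat.le_add_right _ _)).symm
  rw [hsplit]
  apply Nat.mul_le_mul_left
  calc (2:ℕ)^j = ∏ _i ∈ Finset.Ico k (k + j), 2 := by
        rw [Finset.prod_const, Nat.card_Ico]; congr 1; omega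
  _ ≤ _ := Finset.prod_le_prod' fun i _ => q_two p i

lemma summable_fterm (x : ℤ_[p]) : Summable (fterm p x) :=
  Summable.of_nonneg_of_le (fterm_nonneg p x)
    (fun k => (fterm_le p x k).trans (invR_le p k)) summable_geometric_two

/-- The mixed-radix expansion map `ℤ_[p] → ℝ`. -/
def ff (x : ℤ_[p]) : ℝ := ∑' k, fterm p x k

lemma ff_sub_bound {x y : ℤ_[p]} {k : ℕ} (h : ∀ j, j < k → dig p j x = dig p j y) :
    |ff p x - ff p y| ≤ 4 / (R p k : ℝ) := by
  have hsx := summable_fterm p x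
  have hsy := summable_fterm p y
  have hRk : (0:ℝ) < R p k := by exact_mod_cast R_pos p k
  set g : ℕ → ℝ := fun j => if j < k then 0 else (1/2 : ℝ) ^ (j - k) * (2 / (R p k : ℝ))
    with hgdef
  have hgshift : ∀ i : ℕ, g (i + k) = (1/2 : ℝ) ^ i * (2 / (R p k : ℝ)) := by
    intro i
    simp only [hgdef, if_neg (by omega : ¬ i + k < k), Nat.add_sub_cancel]
  have hgsum : Summable g := by
    rw [← summable_nat_add_iff k]
    exact Summable.congr (summable_geometric_two.mul_right _) (fun i => (hgshift i).symm)
  have hgtsum : ∑' j, g j = 4 / (R p k : ℝ) := by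
    have := Summable.sum_add_tsum_nat_add (f := g) k hgsum
    have hz : ∑ i ∈ Finset.range k, g i = 0 := by
      apply Finset.sum_eq_zero
      intro i hi
      simp only [hgdef, if_pos (Finset.mem_range.1 hi)]
    have hshift : ∑' i, g (i + k) = 2 * (2 / (R p k : ℝ)) := by
      rw [tsum_congr hgshift, tsum_mul_right, tsum_geometric_two]
    rw [← this, hz, zero_add, hshift]
    ring
  have hb : ∀ j, |fterm p x j - fterm p y j| ≤ g j := by
    intro j
    rcases lt_or_ge j k with hj | hj
    · rw [hgdef]
      simp only [if_pos hj]
      rw [fterm, fterm, h j hj, sub_self, abs_zero]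
    · have h1 := fterm_le p x j
      have h2 := fterm_le p y j
      have h3 := fterm_nonneg p x j
      have h4 := fterm_nonneg p y j
      have h5 : (1:ℝ) / R p j ≤ (1/2 : ℝ) ^ (j - k) * (1 / (R p k : ℝ)) := by
        have hsh := R_shift p k (j - k)
        have hkj : k + (j - k) = j := by omega
        rw [hkj] at hsh
        have hsh' : ((R p k : ℝ)) * 2 ^ (j - k) ≤ R p j := by exact_mod_cast hsh
        have hRj : (0:ℝ) < R p j := by exact_mod_cast R_pos p j
        rw [div_le_iff₀ hRj]
        have hpow : (0:ℝ) < (2:ℝ) ^ (j - k) := by positivity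
        calc (1:ℝ) = ((1/2:ℝ)^(j-k) * (1/(R p k : ℝ))) * ((R p k : ℝ) * 2^(j-k)) := by
              rw [show ((1/2:ℝ)^(j-k) * (1/(R p k : ℝ))) * ((R p k : ℝ) * 2^(j-k)) = ((1/2:ℝ)*2)^(j-k) * ((R p k:ℝ)/(R p k)) by rw [mul_pow]; ring, div_self hRk.ne']; norm_num
        _ ≤ ((1/2:ℝ)^(j-k) * (1/(R p k : ℝ))) * (R p j : ℝ) := by
              apply mul_le_mul_of_nonneg_left hsh'
              positivity
      have hgj : g j = (1/2 : ℝ) ^ (j - k) * (2 / (R p k : ℝ)) := by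
        rw [hgdef]; simp only [if_neg (by omega : ¬ j < k)]
      rw [hgj, abs_sub_le_iff]
      constructor
      · calc fterm p x j - fterm p y j ≤ 1 / (R p j : ℝ) := by linarith
        _ ≤ (1/2 : ℝ) ^ (j - k) * (1 / (R p k : ℝ)) := h5
        _ ≤ (1/2 : ℝ) ^ (j - k) * (2 / (R p k : ℝ)) := by
              apply mul_le_mul_of_nonneg_left ?_ (by positivity)
              gcongr <;> norm_num
      · calc fterm p y j - fterm p x j ≤ 1 / (R p j : ℝ) := by linarith
        _ ≤ (1/2 : ℝ) ^ (j - k) * (1 / (R p k : ℝ)) := h5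
        _ ≤ (1/2 : ℝ) ^ (j - k) * (2 / (R p k : ℝ)) := by
              apply mul_le_mul_of_nonneg_left ?_ (by positivity)
              gcongr <;> norm_num
  have habs : Summable (fun j => |fterm p x j - fterm p y j|) :=
    (hsx.sub hsy).abs
  have hff : ff p x - ff p y = ∑' j, (fterm p x j - fterm p y j) := by
    unfold ff
    exact (Summable.tsum_sub hsx hsy).symm
  have hns : Summable (fun j => ‖fterm p x j - fterm p y j‖) := by
    simpa [Real.norm_eq_abs] using habs
  calc |ff p x - ff p y| = ‖∑' j, (fterm p x j - fterm p y j)‖ := by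
        rw [hff, Real.norm_eq_abs]
  _ ≤ ∑' j, ‖fterm p x j - fterm p y j‖ := norm_tsum_le_tsum_norm hns
  _ = ∑' j, |fterm p x j - fterm p y j| := by simp [Real.norm_eq_abs]
  _ ≤ ∑' j, g j := Summable.tsum_le_tsum hb habs hgsum
  _ = 4 / (R p k : ℝ) := hgtsum

lemma ff_continuous : Continuous (ff p) := by
  rw [Metric.continuous_iff]
  intro x ε hε
  obtain ⟨K, hK⟩ : ∃ K, 4 / (R p K : ℝ) < ε := by
    obtain ⟨K, hK⟩ := pow_unbounded_of_one_lt (4/ε) (one_lt_two (α := ℝ))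
    refine ⟨K, ?_⟩
    have h2 : ((2:ℝ)^K) ≤ (R p K : ℝ) := by exact_mod_cast R_ge p K
    have hRK : (0:ℝ) < R p K := by exact_mod_cast R_pos p K
    rw [div_lt_iff₀ hRK]
    rw [div_lt_iff₀ hε] at hK
    have hpow : (0:ℝ) < (2:ℝ)^K := by positivity
    nlinarith
  have hpR : (0:ℝ) < (p:ℝ) := by exact_mod_cast p_pos p
  refine ⟨(p:ℝ)^(-(LL K : ℤ)), zpow_pos hpR _, fun y hy => ?_⟩
  have hdvd : (p:ℤ_[p])^(LL K) ∣ y - x := by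
    rw [dvd_iff_norm_le]
    rw [dist_eq_norm] at hy
    exact le_of_lt hy
  have hdig : ∀ j, j < K → dig p j y = dig p j x := fun j hj =>
    dig_congr p (dvd_trans (pow_dvd_pow _ (LL_mono (by omega))) hdvd)
  calc dist (ff p y) (ff p x) = |ff p y - ff p x| := Real.dist_eq _ _
  _ ≤ 4 / (R p K : ℝ) := ff_sub_bound p hdig
  _ < ε := hK

lemma egood_closed : IsClosed (Egood p) := by
  rw [← isOpen_compl_iff, Metric.isOpen_iff]
  intro x hx
  rw [Set.mem_compl_iff, Egood, Set.notMem_setOf_iff] at hx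
  push_neg at hx
  obtain ⟨k, hk⟩ := hx
  have hpR : (0:ℝ) < (p:ℝ) := by exact_mod_cast p_pos p
  refine ⟨(p:ℝ)^(-(LL (k+1) : ℤ)), zpow_pos hpR _, fun y hy => ?_⟩
  rw [Metric.mem_ball] at hy
  have hdvd : (p:ℤ_[p])^(LL (k+1)) ∣ y - x := by
    rw [dvd_iff_norm_le]
    rw [dist_eq_norm] at hy
    exact le_of_lt hy
  rw [Set.mem_compl_iff, Egood, Set.notMem_setOf_iff]
  push_neg
  exact ⟨k, by rw [dig_congr p hdvd]; exact hk⟩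

/-! ### Surjectivity onto `[0,1]` -/

lemma grid_mem (K : ℕ) (j : ℕ → ℕ) (hj : ∀ k, j k < q p k) :
    (∑ k ∈ Finset.range K, (j k : ℝ) / (R p (k+1) : ℝ)) ∈ ff p '' Egood p := by
  have hex : ∀ k, ∃ a, a ∈ D p k ∧ phi p k a = (if k < K then j k else 0) := by
    intro k
    rcases lt_or_ge k K with h | h
    · obtain ⟨a, ha, hphi⟩ := phi_surj p (hj k)
      exact ⟨a, ha, by rw [if_pos h]; exact hphi⟩
    · exact ⟨0, D_zero_mem p k, by rw [if_neg (by omega), phi_zero]⟩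
  choose c hcD hcphi using hex
  have hclt : ∀ k, c k < p ^ (k + 2) := fun k => by have := D_lt p k _ (hcD k); omega
  set x : ℤ_[p] := ((NN p c K : ℕ) : ℤ_[p]) with hxdef
  have hdig : ∀ k, dig p k x = if k < K then c k else 0 := fun k => dig_NN p hclt K k
  have hxE : x ∈ Egood p := by
    intro k
    rw [hdig k]
    split
    · exact hcD k
    · exact D_zero_mem p k
  refine ⟨x, hxE, ?_⟩
  rw [ff, tsum_eq_sum (s := Finset.range K) ?_]
  · apply Finset.sum_congr rfl
    intro k hk
    have hkK := Finset.mem_range.1 hk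
    rw [fterm, hdig k, if_pos hkK]
    have hc := hcphi k
    rw [if_pos hkK] at hc
    rw [hc]
  · intro k hk
    have hkK : ¬ k < K := by simpa using hk
    rw [fterm, hdig k, if_neg hkK, phi_zero]
    simp

lemma radix_nat (K : ℕ) : ∀ N, N < R p K → ∃ j : ℕ → ℕ, (∀ k, j k < q p k) ∧
    N = ∑ k ∈ Finset.range K, j k * ∏ i ∈ Finset.Ico (k+1) K, q p i := by
  induction K with
  | zero =>
    intro N hN
    rw [R_zero] at hN
    exact ⟨fun k => 0, fun k => q_pos p k, by simpa using (by omega : N = 0)⟩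
  | succ K ih =>
    intro N hN
    have hq := q_pos p K
    have hN' : N / q p K < R p K := by
      rw [Nat.div_lt_iff_lt_mul hq]
      rw [R_succ] at hN
      exact hN
    obtain ⟨j', hj', hsum⟩ := ih _ hN'
    refine ⟨Function.update j' K (N % q p K), ?_, ?_⟩
    · intro k
      rcases eq_or_ne k K with rfl | hne
      · rw [Function.update_self]; exact Nat.mod_lt _ hq
      · rw [Function.update_of_ne hne]; exact hj' k
    · rw [Finset.sum_range_succ, Function.update_self, Finset.Ico_self, Finset.prod_empty,
        mul_one]
      have hterm : ∀ k ∈ Finset.range K,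
          Function.update j' K (N % q p K) k * ∏ i ∈ Finset.Ico (k+1) (K+1), q p i
          = (j' k * ∏ i ∈ Finset.Ico (k+1) K, q p i) * q p K := by
        intro k hk
        have hkK := Finset.mem_range.1 hk
        rw [Function.update_of_ne (by omega), Finset.prod_Ico_succ_top (by omega : k + 1 ≤ K)]
        ring
      rw [Finset.sum_congr rfl hterm, ← Finset.sum_mul, ← hsum]
      rw [mul_comm (N / q p K) (q p K)]
      exact (Nat.div_add_mod N (q p K)).symm

lemma radix (K N : ℕ) (h : N < R p K) : ∃ j : ℕ → ℕ, (∀ k, j k < q p k) ∧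
    ((N:ℝ) / (R p K : ℝ) = ∑ k ∈ Finset.range K, (j k : ℝ) / (R p (k+1) : ℝ)) := by
  obtain ⟨j, hj, hsum⟩ := radix_nat p K N h
  refine ⟨j, hj, ?_⟩
  rw [hsum, Nat.cast_sum, Finset.sum_div]
  apply Finset.sum_congr rfl
  intro k hk
  have hkK := Finset.mem_range.1 hk
  have hRu : (R p (k+1) : ℕ) * (∏ i ∈ Finset.Ico (k+1) K, q p i) = R p K := by
    rw [R, R]
    exact Finset.prod_range_mul_prod_Ico _ (by omega)
  have hRuR : ((R p (k+1) : ℝ)) * ((∏ i ∈ Finset.Ico (k+1) K, q p i : ℕ) : ℝ) = (R p K : ℝ) := by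
    exact_mod_cast congrArg (fun n : ℕ => (n:ℝ)) hRu
  have hu0 : ((∏ i ∈ Finset.Ico (k+1) K, q p i : ℕ) : ℝ) ≠ 0 := by
    have : 0 < ∏ i ∈ Finset.Ico (k+1) K, q p i := Finset.prod_pos fun i _ => q_pos p i
    exact_mod_cast this.ne'
  rw [← hRuR, Nat.cast_mul]
  exact mul_div_mul_right _ _ hu0

lemma icc_subset : Set.Icc (0:ℝ) 1 ⊆ ff p '' Egood p := by
  intro t ht
  have himcl : IsClosed (ff p '' Egood p) :=
    ((egood_closed p).isCompact.image (ff_continuous p)).isClosed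
  rw [← himcl.closure_eq]
  rw [Metric.mem_closure_iff]
  intro ε hε
  obtain ⟨K, hK⟩ : ∃ K, 1 / (R p K : ℝ) < ε := by
    obtain ⟨K, hK⟩ := pow_unbounded_of_one_lt (1/ε) (one_lt_two (α := ℝ))
    refine ⟨K, ?_⟩
    have h2 : ((2:ℝ)^K) ≤ (R p K : ℝ) := by exact_mod_cast R_ge p K
    have hRK : (0:ℝ) < R p K := by exact_mod_cast R_pos p K
    rw [div_lt_iff₀ hRK]
    rw [div_lt_iff₀ hε] at hK
    have hpow : (0:ℝ) < (2:ℝ)^K := by positivity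
    nlinarith
  have hRK : (0:ℝ) < (R p K : ℝ) := by exact_mod_cast R_pos p K
  have ht0 : 0 ≤ t := ht.1
  have ht1 : t ≤ 1 := ht.2
  set N : ℕ := min ⌊t * (R p K : ℝ)⌋₊ (R p K - 1) with hNdef
  have hNlt : N < R p K := by
    have := R_pos p K
    omega
  obtain ⟨j, hj, hjsum⟩ := radix p K N hNlt
  refine ⟨∑ k ∈ Finset.range K, (j k:ℝ)/(R p (k+1):ℝ), grid_mem p K j hj, ?_⟩
  rw [← hjsum, Real.dist_eq]
  rcases lt_or_ge (⌊t * (R p K : ℝ)⌋₊) (R p K) with hcase | hcase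
  · have hNfl : N = ⌊t * (R p K : ℝ)⌋₊ := by omega
    have h1 : (N:ℝ) ≤ t * (R p K : ℝ) := by
      rw [hNfl]; exact Nat.floor_le (by positivity)
    have h2 : t * (R p K : ℝ) < (N:ℝ) + 1 := by
      rw [hNfl]; exact Nat.lt_floor_add_one _
    have h3 : (N:ℝ) / (R p K : ℝ) ≤ t := by rw [div_le_iff₀ hRK]; exact h1
    have h4 : t < (N:ℝ)/(R p K : ℝ) + 1/(R p K : ℝ) := by
      rw [← add_div, lt_div_iff₀ hRK]
      exact h2
    rw [abs_lt]
    constructor <;> linarith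
  · have hNfl : N = R p K - 1 := by omega
    have hge : (R p K : ℝ) ≤ t * (R p K : ℝ) := by
      calc (R p K : ℝ) ≤ (⌊t * (R p K : ℝ)⌋₊ : ℝ) := by exact_mod_cast hcase
      _ ≤ t * (R p K : ℝ) := Nat.floor_le (by positivity)
    have hteq1 : t = 1 := le_antisymm ht1 (by nlinarith)
    have hNr : (N:ℝ) = (R p K : ℝ) - 1 := by
      rw [hNfl]
      have := R_pos p K
      push_cast [Nat.cast_sub (by omega : 1 ≤ R p K)]
      ring
    rw [hteq1, hNr]
    have heq : (1:ℝ) - ((R p K : ℝ) - 1)/(R p K : ℝ) = 1/(R p K : ℝ) := by field_simp; ring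
    rw [heq, abs_of_pos (by positivity)]
    exact hK

/-! ### Quantitative lower bounds on `R` via Behrend's theorem -/

lemma q_lower (k : ℕ) :
    (MM p k : ℝ) * Real.exp (-4 * Real.sqrt (Real.log (MM p k))) ≤ (q p k : ℝ) := by
  have h := Behrend.roth_lower_bound (N := MM p k)
  rw [q, D_card]
  exact_mod_cast h

lemma log_p_pos : 0 < Real.log p := Real.log_pos (by exact_mod_cast hp.out.one_lt)

lemma log_two_le_log_p : Real.log 2 ≤ Real.log p :=
  Real.log_le_log (by norm_num) (by exact_mod_cast p_two p)

lemma q_exp_lower (β : ℝ) (hβ0 : 0 < β) (hβ1 : β < 1) :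
    ∃ J : ℕ, ∀ j : ℕ, J ≤ j →
      Real.exp (β * (((j:ℝ) + 2) * Real.log p)) ≤ (q p j : ℝ) := by
  have hppos : (0:ℝ) < (p:ℝ) := by exact_mod_cast p_pos p
  set c := Real.log p with hc
  have hc0 : 0 < c := log_p_pos p
  have hc2 : Real.log 2 ≤ c := log_two_le_log_p p
  have hl2 : (0:ℝ) < Real.log 2 := Real.log_pos (by norm_num)
  have h1β : 0 < 1 - β := by linarith
  set X₀ : ℝ := max ((8/(1-β))^2) (2*Real.log 4/(1-β)) with hX₀def
  refine ⟨⌈X₀ / Real.log 2⌉₊, fun j hj => ?_⟩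
  set X : ℝ := ((j:ℝ) + 2) * c with hXdef
  have hXX₀ : X₀ ≤ X := by
    calc X₀ = (X₀ / Real.log 2) * Real.log 2 := by field_simp
    _ ≤ (⌈X₀ / Real.log 2⌉₊ : ℝ) * Real.log 2 :=
        mul_le_mul_of_nonneg_right (Nat.le_ceil _) hl2.le
    _ ≤ ((j:ℝ) + 2) * c := by
        have hj' : (⌈X₀ / Real.log 2⌉₊ : ℝ) ≤ (j:ℝ) := by exact_mod_cast hj
        have hj2 : (⌈X₀ / Real.log 2⌉₊ : ℝ) ≤ (j:ℝ) + 2 := by linarith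
        exact mul_le_mul hj2 hc2 hl2.le (by positivity)
  have hX0 : 0 < X := by positivity
  have hs1 : 8/(1-β) ≤ Real.sqrt X := by
    have h1 : ((8/(1-β))^2) ≤ X := le_trans (le_max_left _ _) hXX₀
    have hb0 : (0:ℝ) ≤ 8/(1-β) := by positivity
    calc 8/(1-β) = Real.sqrt ((8/(1-β))^2) := (Real.sqrt_sq hb0).symm
    _ ≤ Real.sqrt X := Real.sqrt_le_sqrt h1
  have hsX : Real.sqrt X * Real.sqrt X = X := Real.mul_self_sqrt hX0.le
  have hsnn : 0 ≤ Real.sqrt X := Real.sqrt_nonneg X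
  have hkey : Real.log 4 + 4 * Real.sqrt X ≤ (1-β) * X := by
    have hs1' : 8 ≤ (1-β) * Real.sqrt X := by
      rw [div_le_iff₀ h1β] at hs1
      linarith
    have hA : 4 * Real.sqrt X ≤ (1-β)/2 * X := by
      have hmul : 8 * Real.sqrt X ≤ ((1-β) * Real.sqrt X) * Real.sqrt X :=
        mul_le_mul_of_nonneg_right hs1' hsnn
      rw [mul_assoc, hsX] at hmul
      linarith
    have hB : Real.log 4 ≤ (1-β)/2 * X := by
      have h2 : 2*Real.log 4/(1-β) ≤ X := le_trans (le_max_right _ _) hXX₀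
      rw [div_le_iff₀ h1β] at h2
      nlinarith
    linarith
  have hM1 : ((p:ℝ))^(j+2) ≤ 4 * (MM p j : ℝ) := by exact_mod_cast pow_le_four_MM p j
  have hM2 : (MM p j:ℝ) ≤ ((p:ℝ))^(j+2) := by exact_mod_cast MM_le p j
  have hMpos : (0:ℝ) < (MM p j : ℝ) := by
    exact_mod_cast lt_of_lt_of_le two_pos (two_le_MM p j)
  have hppow : ((p:ℝ))^(j+2) = Real.exp X := by
    have hlog : X = Real.log (((p:ℝ))^(j+2)) := by
      rw [Real.log_pow]; rw [hXdef, hc]; push_cast; ring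
    rw [hlog, Real.exp_log (by positivity)]
  have hlogM : Real.log (MM p j) ≤ X := by
    calc Real.log (MM p j) ≤ Real.log (((p:ℝ))^(j+2)) := Real.log_le_log hMpos hM2
    _ = X := by rw [hppow, Real.log_exp]
  have hsqrtM : Real.sqrt (Real.log (MM p j)) ≤ Real.sqrt X := Real.sqrt_le_sqrt hlogM
  have hq := q_lower p j
  have hstep : Real.exp X / 4 * Real.exp (-4 * Real.sqrt X) ≤ (q p j : ℝ) := by
    have hEX : Real.exp X / 4 ≤ (MM p j : ℝ) := by
      rw [← hppow]; linarith
    have hEE : Real.exp (-4 * Real.sqrt X)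
        ≤ Real.exp (-4 * Real.sqrt (Real.log (MM p j))) := by
      rw [Real.exp_le_exp]; nlinarith
    calc Real.exp X / 4 * Real.exp (-4*Real.sqrt X)
        ≤ (MM p j : ℝ) * Real.exp (-4*Real.sqrt (Real.log (MM p j))) :=
          mul_le_mul hEX hEE (Real.exp_pos _).le hMpos.le
    _ ≤ (q p j : ℝ) := hq
  have hfin : Real.exp (β * X) ≤ Real.exp X / 4 * Real.exp (-4*Real.sqrt X) := by
    have h1 : Real.exp X / 4 * Real.exp (-4*Real.sqrt X)
        = Real.exp (X + (-4)*Real.sqrt X) / 4 := by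
      rw [Real.exp_add]; ring
    rw [h1, le_div_iff₀ (by norm_num : (0:ℝ) < 4)]
    have h2 : Real.exp (β*X) * 4 = Real.exp (β*X + Real.log 4) := by
      rw [Real.exp_add, Real.exp_log (by norm_num : (0:ℝ) < 4)]
    rw [h2, Real.exp_le_exp]
    linarith
  calc Real.exp (β * (((j:ℝ)+2) * Real.log p)) = Real.exp (β * X) := by rw [hXdef, hc]
  _ ≤ _ := le_trans hfin hstep

lemma arch (a b c' : ℝ) (ha : 0 < a) :
    ∃ K : ℕ, ∀ k : ℕ, K ≤ k → b * ((k:ℝ) + 2) + c' ≤ a * ((k:ℝ) * (k:ℝ)) := by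
  refine ⟨max 1 ⌈(3*|b| + |c'|)/a⌉₊, fun k hk => ?_⟩
  have hk1 : (1:ℝ) ≤ (k:ℝ) := by exact_mod_cast le_trans (le_max_left _ _) hk
  have hk2 : (3*|b| + |c'|)/a ≤ (k:ℝ) := by
    calc (3*|b| + |c'|)/a ≤ (⌈(3*|b| + |c'|)/a⌉₊:ℝ) := Nat.le_ceil _
    _ ≤ (k:ℝ) := by exact_mod_cast le_trans (le_max_right _ _) hk
  rw [div_le_iff₀ ha] at hk2
  have hb1 := le_abs_self b
  have hb2 := neg_abs_le b
  have hc1 := le_abs_self c'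
  have habs1 := abs_nonneg b
  have habs2 := abs_nonneg c'
  nlinarith [mul_le_mul_of_nonneg_right hk2 (by positivity : (0:ℝ) ≤ (k:ℝ))]

lemma bound_of_eventually {u v : ℕ → ℝ} (hv : ∀ k, 0 < v k)
    (h : ∃ K, ∀ k, K ≤ k → u k ≤ v k) :
    ∃ C : ℝ, 0 < C ∧ ∀ k, u k ≤ C * v k := by
  obtain ⟨K, hK⟩ := h
  have hsum_nonneg : 0 ≤ ∑ i ∈ Finset.range K, max (u i / v i) 0 :=
    Finset.sum_nonneg fun i _ => le_max_right _ _
  refine ⟨1 + ∑ i ∈ Finset.range K, max (u i / v i) 0, by linarith, fun k => ?_⟩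
  rcases lt_or_ge k K with hk | hk
  · have hterm : max (u k / v k) 0 ≤ ∑ i ∈ Finset.range K, max (u i / v i) 0 :=
      Finset.single_le_sum (f := fun i => max (u i / v i) 0)
        (fun i _ => le_max_right _ _) (Finset.mem_range.2 hk)
    have h1 : u k = (u k / v k) * v k := (div_mul_cancel₀ (u k) (hv k).ne').symm
    calc u k = (u k / v k) * v k := h1
    _ ≤ max (u k / v k) 0 * v k := mul_le_mul_of_nonneg_right (le_max_left _ _) (hv k).le
    _ ≤ (1 + ∑ i ∈ Finset.range K, max (u i / v i) 0) * v k :=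
        mul_le_mul_of_nonneg_right (by linarith) (hv k).le
  · calc u k ≤ v k := hK k hk
    _ = 1 * v k := (one_mul _).symm
    _ ≤ (1 + ∑ i ∈ Finset.range K, max (u i / v i) 0) * v k :=
        mul_le_mul_of_nonneg_right (by linarith) (hv k).le

lemma RA (α : ℝ) (hα0 : 0 < α) (hα1 : α < 1) :
    ∃ C : ℝ, 0 < C ∧ ∀ k : ℕ,
      Real.exp (α * ((LL (k+1) : ℝ) * Real.log p)) ≤ C * (R p k : ℝ) := by
  set c := Real.log p with hc
  have hc0 : 0 < c := log_p_pos p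
  set β := (1+α)/2 with hβdef
  have hβ0 : 0 < β := by rw [hβdef]; linarith
  have hβ1 : β < 1 := by rw [hβdef]; linarith
  have hαβ : α < β := by rw [hβdef]; linarith
  obtain ⟨J, hJ⟩ := q_exp_lower p β hβ0 hβ1
  apply bound_of_eventually (hv := fun k => by exact_mod_cast R_pos p k)
  have hβα : (0:ℝ) < β - α := by linarith
  obtain ⟨K₂, hK₂⟩ := arch ((β - α)*c/2) (α*c) (β*c*(LL J : ℝ)) (by positivity)
  refine ⟨max J K₂, fun k hk => ?_⟩
  have hkJ : J ≤ k := le_trans (le_max_left _ _) hk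
  have hkK₂ : K₂ ≤ k := le_trans (le_max_right _ _) hk
  have hRsplit : (R p J : ℕ) * ∏ i ∈ Finset.Ico J k, q p i = R p k := by
    rw [R, R]
    exact Finset.prod_range_mul_prod_Ico _ hkJ
  have hRsplitR : (R p J : ℝ) * ((∏ i ∈ Finset.Ico J k, q p i : ℕ) : ℝ) = (R p k : ℝ) := by
    exact_mod_cast congrArg (fun n : ℕ => (n:ℝ)) hRsplit
  have hprod : Real.exp (β * (((LL k : ℝ) - (LL J : ℝ)) * c))
      ≤ ((∏ i ∈ Finset.Ico J k, q p i : ℕ) : ℝ) := by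
    have hnat : LL J + ∑ i ∈ Finset.Ico J k, (i+2) = LL k := by
      rw [LL, LL, Finset.range_eq_Ico, Finset.range_eq_Ico]
      exact Finset.sum_Ico_consecutive (M := ℕ) _ (Nat.zero_le _) hkJ
    have hsumr : ∑ i ∈ Finset.Ico J k, ((i:ℝ)+2) = (LL k : ℝ) - (LL J : ℝ) := by
      have := congrArg (fun n : ℕ => (n:ℝ)) hnat
      push_cast at this
      linarith
    have hsum : ∑ i ∈ Finset.Ico J k, (β * (((i:ℝ)+2) * c))
        = β * (((LL k : ℝ) - (LL J:ℝ)) * c) := by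
      rw [← Finset.mul_sum, ← Finset.sum_mul, hsumr]
    rw [← hsum, Real.exp_sum]
    push_cast
    exact Finset.prod_le_prod (fun i _ => (Real.exp_pos _).le)
      (fun i hi => hJ i (Finset.mem_Ico.1 hi).1)
  have hLLk : ((k:ℝ) * (k:ℝ))/2 ≤ (LL k : ℝ) := by
    have h2 := two_LL k
    have h2r : (2:ℝ) * (LL k : ℝ) = (k:ℝ) * ((k:ℝ)+3) := by
      exact_mod_cast congrArg (fun n : ℕ => (n:ℝ)) h2
    nlinarith [(by positivity : (0:ℝ) ≤ (k:ℝ))]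
  have hLLsucc : (LL (k+1) : ℝ) = (LL k : ℝ) + ((k:ℝ) + 2) := by
    have := LL_succ k
    exact_mod_cast congrArg (fun n : ℕ => (n:ℝ)) this
  have harch := hK₂ k hkK₂
  have hRJ1 : (1:ℝ) ≤ (R p J : ℝ) := by exact_mod_cast R_pos p J
  have hexp : Real.exp (α * ((LL (k+1):ℝ) * c))
      ≤ Real.exp (β * (((LL k:ℝ) - (LL J:ℝ)) * c)) := by
    rw [Real.exp_le_exp]
    have h1 : (β - α) * c / 2 * ((k:ℝ)*(k:ℝ)) ≤ (β - α) * c * (LL k : ℝ) := by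
      have hβα : (0:ℝ) < β - α := by linarith
      calc (β-α)*c/2*((k:ℝ)*(k:ℝ)) = (β-α)*c*(((k:ℝ)*(k:ℝ))/2) := by ring
      _ ≤ (β-α)*c*(LL k:ℝ) := mul_le_mul_of_nonneg_left hLLk (by positivity)
    rw [hLLsucc]
    nlinarith
  calc Real.exp (α * ((LL (k+1):ℝ) * c))
      ≤ Real.exp (β * (((LL k:ℝ) - (LL J:ℝ)) * c)) := hexp
  _ ≤ (R p J : ℝ) * Real.exp (β * (((LL k:ℝ) - (LL J:ℝ)) * c)) := by
      nlinarith [Real.exp_pos (β * (((LL k:ℝ) - (LL J:ℝ)) * c))]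
  _ ≤ (R p J : ℝ) * ((∏ i ∈ Finset.Ico J k, q p i : ℕ) : ℝ) :=
      mul_le_mul_of_nonneg_left hprod (by linarith)
  _ = (R p k : ℝ) := hRsplitR

/-! ### Hölder continuity of `ff` -/

lemma holderWith_of_dist_le {X Y : Type*} [PseudoMetricSpace X] [PseudoMetricSpace Y]
    {C r : ℝ≥0} {f : X → Y} (h : ∀ x y, dist (f x) (f y) ≤ (C:ℝ) * dist x y ^ (r : ℝ)) :
    HolderWith C r f := by
  intro x y
  rw [edist_dist, edist_dist]
  calc ENNReal.ofReal (dist (f x) (f y)) ≤ ENNReal.ofReal ((C:ℝ) * dist x y ^ (r:ℝ)) :=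
    ENNReal.ofReal_le_ofReal (h x y)
  _ = (C : ℝ≥0∞) * ENNReal.ofReal (dist x y) ^ (r:ℝ) := by
      rw [ENNReal.ofReal_mul C.coe_nonneg, ENNReal.ofReal_rpow_of_nonneg dist_nonneg r.coe_nonneg]
      congr 1
      exact ENNReal.ofReal_coe_nnreal

lemma ff_holder (α : ℝ≥0) (hα0 : 0 < α) (hα1 : (α:ℝ) < 1) :
    ∃ C : ℝ≥0, HolderWith C α (ff p) := by
  obtain ⟨C, hC0, hC⟩ := RA p (α:ℝ) (by exact_mod_cast hα0) hα1
  refine ⟨(4*C).toNNReal, holderWith_of_dist_le ?_⟩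
  intro x y
  have hcoe : (((4*C).toNNReal : ℝ≥0) : ℝ) = 4*C := Real.coe_toNNReal _ (by positivity)
  rw [hcoe]
  rcases eq_or_ne x y with rfl | hxy
  · have : (α:ℝ) ≠ 0 := by positivity
    simp [dist_self, Real.zero_rpow this]
  · have hd0 : x - y ≠ 0 := sub_ne_zero.2 hxy
    have hppos : (0:ℝ) < (p:ℝ) := by exact_mod_cast p_pos p
    have hp1 : (1:ℝ) < (p:ℝ) := by exact_mod_cast hp.out.one_lt
    set n0 : ℕ := (x - y).valuation with hn0
    have hval : ((x - y).valuation : ℤ) = (n0 : ℤ) :=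
      rfl
    have hdist : dist x y = (p:ℝ) ^ (-(n0:ℤ)) := by
      rw [dist_eq_norm, PadicInt.norm_eq_zpow_neg_valuation hd0, hval]
    obtain ⟨k, hk1, hk2⟩ := exists_block n0
    have hdig : ∀ j, j < k → dig p j x = dig p j y := by
      intro j hj
      apply dig_congr
      have h1 : (p:ℤ_[p])^(LL k) ∣ x - y := by
        rw [dvd_iff_norm_le p, ← dist_eq_norm, hdist]
        apply (zpow_le_zpow_iff_right₀ hp1).2
        omega
      exact dvd_trans (pow_dvd_pow _ (LL_mono (by omega : j + 1 ≤ k))) h1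
    have hbound := ff_sub_bound p hdig
    set c := Real.log p with hcdef
    have hc0 : (0:ℝ) < c := log_p_pos p
    have hRk : (0:ℝ) < (R p k : ℝ) := by exact_mod_cast R_pos p k
    have h2 : (1:ℝ)/(R p k : ℝ) ≤ C * Real.exp (-(α:ℝ) * ((LL (k+1):ℝ) * c)) := by
      have hCk := hC k
      rw [div_le_iff₀ hRk]
      have hprod : Real.exp ((α:ℝ) * ((LL (k+1):ℝ) * c))
          * Real.exp (-(α:ℝ) * ((LL (k+1):ℝ) * c)) = 1 := by
        rw [← Real.exp_add]
        norm_num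
      nlinarith [mul_le_mul_of_nonneg_right hCk
        (Real.exp_pos (-(α:ℝ) * ((LL (k+1):ℝ) * c))).le,
        Real.exp_pos (-(α:ℝ) * ((LL (k+1):ℝ) * c))]
    have h3 : Real.exp (-(α:ℝ) * ((LL (k+1):ℝ) * c)) ≤ dist x y ^ ((α:ℝ)) := by
      have hdistpos : (0:ℝ) < dist x y := by
        rw [hdist]; exact zpow_pos hppos _
      have hdlog : Real.log (dist x y) = -((n0:ℝ)) * c := by
        rw [hdist, Real.log_zpow]
        push_cast
        ring
      have hrw : dist x y ^ ((α:ℝ)) = Real.exp (-(α:ℝ) * ((n0:ℝ) * c)) := by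
        rw [Real.rpow_def_of_pos hdistpos, hdlog]
        congr 1
        ring
      rw [hrw, Real.exp_le_exp]
      have hn0le : (n0:ℝ) ≤ (LL (k+1):ℝ) := by exact_mod_cast le_of_lt hk2
      nlinarith [mul_le_mul_of_nonneg_left (mul_le_mul_of_nonneg_right hn0le hc0.le)
        α.coe_nonneg]
    calc dist (ff p x) (ff p y) = |ff p x - ff p y| := Real.dist_eq _ _
    _ ≤ 4 / (R p k : ℝ) := hbound
    _ = 4 * (1/(R p k : ℝ)) := by ring
    _ ≤ 4 * (C * Real.exp (-(α:ℝ) * ((LL (k+1):ℝ) * c))) :=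
        mul_le_mul_of_nonneg_left h2 (by norm_num)
    _ ≤ 4 * (C * (dist x y ^ ((α:ℝ)))) := by
        apply mul_le_mul_of_nonneg_left ?_ (by norm_num)
        exact mul_le_mul_of_nonneg_left h3 hC0.le
    _ = 4 * C * dist x y ^ ((α:ℝ)) := by ring

/-! ### Dimension bounds -/

lemma dimH_egood_lower : (1:ℝ≥0∞) ≤ dimH (Egood p) := by
  apply ENNReal.le_of_forall_nnreal_lt
  intro r hr
  rcases eq_or_ne r 0 with rfl | hr0
  · simp
  · have hr0' : 0 < r := zero_lt_iff.2 hr0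
    have hr1 : (r:ℝ) < 1 := by exact_mod_cast hr
    obtain ⟨C, hC⟩ := ff_holder p r hr0' hr1
    have himg : dimH (ff p '' Egood p) ≤ dimH (Egood p) / r :=
      (hC.holderOnWith (Egood p)).dimH_image_le hr0'
    have hicc : (1:ℝ≥0∞) ≤ dimH (ff p '' Egood p) := by
      have hdim : dimH (Set.Icc (0:ℝ) 1) = 1 := by
        rw [Real.dimH_of_nonempty_interior (by rw [interior_Icc]; exact ⟨1/2, by norm_num⟩)]
        simp
      rw [← hdim]
      exact dimH_mono (icc_subset p)
    have hfin := le_trans hicc himg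
    rwa [ENNReal.le_div_iff_mul_le (Or.inl (by exact_mod_cast hr0))
      (Or.inl ENNReal.coe_ne_top), one_mul] at hfin

lemma dimH_univ_upper : dimH (Set.univ : Set ℤ_[p]) ≤ 1 := by
  borelize ℤ_[p]
  by_contra hcon
  push_neg at hcon
  obtain ⟨d, hd1, hd2⟩ := ENNReal.lt_iff_exists_nnreal_btwn.1 hcon
  have hd1' : (1:ℝ) < (d:ℝ) := by exact_mod_cast hd1
  have hpne0 : ((p:ℝ≥0∞)) ≠ 0 := by
    simp only [ne_eq, Nat.cast_eq_zero]
    exact (p_pos p).ne'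
  have hpnetop : ((p:ℝ≥0∞)) ≠ ⊤ := ENNReal.natCast_ne_top p
  have hp1 : (1:ℝ≥0∞) < (p:ℝ≥0∞) := by exact_mod_cast hp.out.one_lt
  set cc : ℝ≥0∞ := (p:ℝ≥0∞) ^ ((1:ℝ) - (d:ℝ)) with hccdef
  have hzero : μH[(d:ℝ)] (Set.univ : Set ℤ_[p]) = 0 := by
    have hdiam : ∀ n (i : Fin (p^n)),
        EMetric.diam {x : ℤ_[p] | x.appr n = (i : Fin (p^n)).val} ≤ ((p:ℝ≥0∞) ^ n)⁻¹ := by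
      intro n i
      apply EMetric.diam_le
      intro x hx y hy
      rw [Set.mem_setOf_eq] at hx hy
      have hdvd : (p:ℤ_[p])^n ∣ x - y := by
        have hxy : x - y = (x - (x.appr n : ℤ_[p])) - (y - (y.appr n : ℤ_[p])) := by
          rw [show x.appr n = y.appr n from hx.trans hy.symm]
          ring
        rw [hxy]
        exact dvd_sub (appr_dvd p x n) (appr_dvd p y n)
      rw [dvd_iff_norm_le] at hdvd
      have hppos : (0:ℝ) < (p:ℝ) := by exact_mod_cast p_pos p
      have hofr : ENNReal.ofReal ((p:ℝ)^(-(n:ℤ))) = ((p:ℝ≥0∞) ^ n)⁻¹ := by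
        rw [zpow_neg, zpow_natCast, ENNReal.ofReal_inv_of_pos (by positivity),
          ENNReal.ofReal_pow hppos.le, ENNReal.ofReal_natCast]
      rw [edist_dist]
      calc ENNReal.ofReal (dist x y) ≤ ENNReal.ofReal ((p:ℝ)^(-(n:ℤ))) := by
            apply ENNReal.ofReal_le_ofReal
            rw [dist_eq_norm]
            exact hdvd
      _ = ((p:ℝ≥0∞) ^ n)⁻¹ := hofr
    have hle := MeasureTheory.Measure.hausdorffMeasure_le_liminf_sum (d:ℝ)
      (Set.univ : Set ℤ_[p])
      (l := Filter.atTop)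
      (fun n => ((p:ℝ≥0∞) ^ n)⁻¹)
      (by
        have heq : (fun n : ℕ => ((p:ℝ≥0∞) ^ n)⁻¹) = fun n => ((p:ℝ≥0∞)⁻¹)^n := by
          funext n
          rw [ENNReal.inv_pow]
        rw [heq]
        exact ENNReal.tendsto_pow_atTop_nhds_zero_of_lt_one (ENNReal.inv_lt_one.2 hp1))
      (fun n i => {x : ℤ_[p] | x.appr n = (i : Fin (p^n)).val})
      (Filter.Eventually.of_forall hdiam)
      (by
        apply Filter.Eventually.of_forall
        intro n x _
        exact Set.mem_iUnion.2 ⟨⟨x.appr n, PadicInt.appr_lt x n⟩, rfl⟩)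
    have hsum : ∀ n : ℕ, (∑ _i : Fin (p^n), ((((p:ℝ≥0∞) ^ n)⁻¹) ^ (d:ℝ))) = cc ^ n := by
      intro n
      rw [Finset.sum_const, Finset.card_univ, Fintype.card_fin, nsmul_eq_mul]
      have hcast : ((p^n : ℕ) : ℝ≥0∞) = (p:ℝ≥0∞)^n := by push_cast; ring
      have h1 : (((p:ℝ≥0∞) ^ n)⁻¹) ^ (d:ℝ) = (p:ℝ≥0∞) ^ (-((n:ℝ) * (d:ℝ))) := by
        rw [← ENNReal.rpow_natCast ((p:ℝ≥0∞)) n, ← ENNReal.rpow_neg, ← ENNReal.rpow_mul]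
        congr 1
        ring
      have h2 : ((p:ℝ≥0∞) ^ n : ℝ≥0∞) = (p:ℝ≥0∞) ^ ((n:ℝ)) := (ENNReal.rpow_natCast _ n).symm
      rw [hcast, h1, h2, ← ENNReal.rpow_add _ _ hpne0 hpnetop, hccdef,
        ← ENNReal.rpow_natCast ((p:ℝ≥0∞) ^ ((1:ℝ) - (d:ℝ))) n, ← ENNReal.rpow_mul]
      congr 1
      ring
    have hle2 : Filter.liminf (fun n => ∑ i : Fin (p^n),
        EMetric.diam {x : ℤ_[p] | x.appr n = (i : Fin (p^n)).val} ^ (d:ℝ)) Filter.atTop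
        ≤ Filter.liminf (fun n => cc ^ n) Filter.atTop := by
      refine Filter.liminf_le_liminf (Filter.Eventually.of_forall fun n => ?_)
      calc (∑ i : Fin (p^n),
          EMetric.diam {x : ℤ_[p] | x.appr n = (i : Fin (p^n)).val} ^ (d:ℝ))
          ≤ ∑ _i : Fin (p^n), ((((p:ℝ≥0∞) ^ n)⁻¹) ^ (d:ℝ)) :=
            Finset.sum_le_sum fun i _ => ENNReal.rpow_le_rpow (hdiam n i) d.coe_nonneg
      _ = cc ^ n := hsum n
    have hcc1 : cc < 1 :=
      ENNReal.rpow_lt_one_of_one_lt_of_neg hp1 (by linarith)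
    have htend : Filter.Tendsto (fun n => cc ^ n) Filter.atTop (nhds 0) :=
      ENNReal.tendsto_pow_atTop_nhds_zero_of_lt_one hcc1
    have hfinal := le_trans hle hle2
    rw [htend.liminf_eq] at hfinal
    exact le_antisymm hfinal (by simp)
  have hdim_le : dimH (Set.univ : Set ℤ_[p]) ≤ (d:ℝ≥0∞) := by
    apply dimH_le_of_hausdorffMeasure_ne_top
    rw [hzero]
    exact ENNReal.zero_ne_top
  exact absurd hd2 (not_lt.2 hdim_le)

end PadicNoAP

end PadicNoAPAux

/-- **Full-dimensional subsets of `ℚ_p` without three-term arithmetic progressions.**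
For every prime `p` there is a set `E ⊆ ℚ_p` of Hausdorff dimension `1` containing no three
distinct points `x, y, z` with `x + z = 2y`. -/
theorem padic_set_without_three_term_progressions (p : ℕ) [Fact p.Prime] :
    ∃ E : Set ℚ_[p], dimH E = 1 ∧
      ¬ ∃ x y z : ℚ_[p], x ∈ E ∧ y ∈ E ∧ z ∈ E ∧
        x ≠ y ∧ y ≠ z ∧ x ≠ z ∧ x + z = 2 * y := by
  classical
  set f : ℤ_[p] →+* ℚ_[p] := PadicInt.Coe.ringHom with hfdef
  have hiso : Isometry (f : ℤ_[p] → ℚ_[p]) :=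
    AddMonoidHomClass.isometry_of_norm _ (fun x => (PadicInt.norm_def (z := x)).symm)
  refine ⟨(f : ℤ_[p] → ℚ_[p]) '' PadicNoAP.Egood p, ?_, ?_⟩
  · rw [hiso.dimH_image]
    refine le_antisymm ?_ (PadicNoAP.dimH_egood_lower p)
    exact (dimH_mono (Set.subset_univ _)).trans (PadicNoAP.dimH_univ_upper p)
  · rintro ⟨x, y, z, hx, hy, hz, hxy, hyz, hxz, heq⟩
    obtain ⟨x', hx', rfl⟩ := hx
    obtain ⟨y', hy', rfl⟩ := hy
    obtain ⟨z', hz', rfl⟩ := hz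
    apply PadicNoAP.egood_free p hx' hy' hz' ?_ ?_
    · apply hiso.injective
      rw [map_add, map_mul]
      have h2 : f 2 = 2 := by
        rw [map_ofNat]
      rw [h2]
      exact heq
    · intro h
      exact hxy (by rw [h])
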